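/- Let m ≥ 4 with m ≡ 6 (mod 8). Then the bent functions f_{1,2} and f_{0,3} are self-dual: for f ∈ {f_{1,2}, f_{0,3}} and every y ∈ F_2^m, ∑_{x ∈ F_2^m} (-1)^{f(x) + x·y} = 2^{m/2} · (-1)^{f(y)}. -/

import Mathlib

open Finset

/-- Hamming weight of a vector of `F₂^m`. -/
def wt {m : ℕ} (x : Fin m → ZMod 2) : ℕ :=
  (Finset.univ.filter (fun i => x i = 1)).card

/-- The Boolean function `f_{i₁,i₂}` : value `1` iff `wt x ≡ i₁ or i₂ (mod 4)`. -/
def bf (i₁ i₂ : ℕ) {m : ℕ} (x : Fin m → ZMod 2) : ZMod 2 :=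
  if wt x % 4 = i₁ ∨ wt x % 4 = i₂ then 1 else 0

/-- Inner product over `F₂`. -/
def dot {m : ℕ} (a x : Fin m → ZMod 2) : ZMod 2 := ∑ i, a i * x i

abbrev GI := Zsqrtd (-1)
def Ii : GI := Zsqrtd.sqrtd

lemma Isq : Ii ^ 2 = -1 := by
  ext <;> simp [Ii, pow_two, Zsqrtd.re_mul, Zsqrtd.im_mul]

lemma I4 : Ii ^ 4 = 1 := by
  have h : Ii ^ 4 = (Ii ^ 2) ^ 2 := by ring
  rw [h, Isq]; ring

lemma nI4 : (-Ii) ^ 4 = 1 := by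
  have h : (-Ii) ^ 4 = Ii ^ 4 := by ring
  rw [h, I4]

lemma pow_mod4 {M : Type*} [Monoid M] (u : M) (hu : u ^ 4 = 1) (n : ℕ) :
    u ^ n = u ^ (n % 4) := by
  conv_lhs => rw [← Nat.div_add_mod n 4]
  rw [pow_add, pow_mul, hu, one_pow, one_mul]

lemma pow_val_add {M : Type*} [Monoid M] (u : M) (hu : u ^ 2 = 1) (a b : ZMod 2) :
    u ^ (a + b).val = u ^ a.val * u ^ b.val := by
  have h : ∀ n, u ^ n = u ^ (n % 2) := fun n => by
    conv_lhs => rw [← Nat.div_add_mod n 2]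
    rw [pow_add, pow_mul, hu, one_pow, one_mul]
  have hv : (a + b).val % 2 = (a.val + b.val) % 2 := by
    rw [ZMod.val_add]; omega
  calc u ^ (a + b).val = u ^ ((a.val + b.val) % 2) := by rw [h, hv]
    _ = u ^ (a.val + b.val) := (h _).symm
    _ = _ := pow_add u _ _

lemma pow_val_sum {M : Type*} [CommMonoid M] (u : M) (hu : u ^ 2 = 1)
    {ι : Type*} (s : Finset ι) (g : ι → ZMod 2) :
    u ^ (∑ j ∈ s, g j).val = ∏ j ∈ s, u ^ (g j).val := by
  induction s using Finset.cons_induction with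
  | empty => simp
  | cons a s ha ih =>
    rw [Finset.sum_cons, Finset.prod_cons, pow_val_add u hu, ih]

lemma wt_eq_sum {m : ℕ} (x : Fin m → ZMod 2) : wt x = ∑ i, (x i).val := by
  rw [wt, Finset.card_filter]
  refine Finset.sum_congr rfl fun i _ => ?_
  have : ∀ a : ZMod 2, (if a = 1 then 1 else 0) = a.val := by decide
  exact this (x i)

lemma coord_sum (c : ZMod 2) :
    ∑ b : ZMod 2, Ii ^ b.val * (-1 : GI) ^ (b * c).val
      = if c = 1 then 1 - Ii else 1 + Ii := by
  have huniv : (Finset.univ : Finset (ZMod 2)) = {0, 1} := by decide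
  rw [huniv, Finset.sum_insert (by decide), Finset.sum_singleton]
  fin_cases c <;> simp [ZMod.val_one] <;> rfl

lemma bf12_val {m : ℕ} (x : Fin m → ZMod 2) :
    (bf 1 2 x).val = if wt x % 4 = 1 ∨ wt x % 4 = 2 then 1 else 0 := by
  rw [bf]; split <;> simp [ZMod.val_one]

lemma key_re (w t : ℕ) (hw : w ≤ 2 * t) (ht : t % 4 = 3) :
    ((1 + Ii) * ((1 - Ii) ^ w * (1 + Ii) ^ (2 * t - w))).re
      = 2 ^ t * (-1 : ℤ) ^ (if w % 4 = 1 ∨ w % 4 = 2 then 1 else 0) := by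
  have h1 : (1 - Ii) = (-Ii) * (1 + Ii) := by
    have : (-Ii) * (1 + Ii) = -Ii - Ii ^ 2 := by ring
    rw [this, Isq]; ring
  have h2 : (1 + Ii) ^ 2 = 2 * Ii := by
    have : (1 + Ii) ^ 2 = 1 + 2 * Ii + Ii ^ 2 := by ring
    rw [this, Isq]; ring
  have hsplit : (1 + Ii) * ((1 - Ii) ^ w * (1 + Ii) ^ (2 * t - w))
      = ((2 : GI) ^ t) * ((1 + Ii) * ((-Ii) ^ w * Ii ^ t)) := by
    rw [h1, mul_pow]
    have hcomb : (1 + Ii) ^ w * (1 + Ii) ^ (2 * t - w) = (1 + Ii) ^ (2 * t) := by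
      rw [← pow_add]; congr 1; omega
    calc (1 + Ii) * ((-Ii) ^ w * (1 + Ii) ^ w * (1 + Ii) ^ (2 * t - w))
        = (1 + Ii) * ((-Ii) ^ w * ((1 + Ii) ^ w * (1 + Ii) ^ (2 * t - w))) := by ring
      _ = (1 + Ii) * ((-Ii) ^ w * ((1 + Ii) ^ 2) ^ t) := by rw [hcomb, ← pow_mul]
      _ = (1 + Ii) * ((-Ii) ^ w * (2 ^ t * Ii ^ t)) := by rw [h2, mul_pow]
      _ = _ := by ring
  rw [hsplit]
  have h2re : ((2 : GI) ^ t) = ((2 ^ t : ℤ) : GI) := by push_cast; ring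
  rw [h2re]
  have hIt : Ii ^ t = Ii ^ 3 := by rw [pow_mod4 Ii I4, ht]
  have hw4 : (-Ii) ^ w = (-Ii) ^ (w % 4) := pow_mod4 _ nI4 w
  rw [hIt, hw4]
  have hlt : w % 4 = 0 ∨ w % 4 = 1 ∨ w % 4 = 2 ∨ w % 4 = 3 := by omega
  have hre : ∀ z : GI, (((2 ^ t : ℤ) : GI) * z).re = 2 ^ t * z.re := by
    intro z
    rw [Zsqrtd.re_mul, Zsqrtd.re_intCast, Zsqrtd.im_intCast]; ring
  rcases hlt with h | h | h | h <;> rw [h, hre] <;>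
    norm_num [Ii, pow_succ, Zsqrtd.re_mul, Zsqrtd.im_mul]

lemma re_sum {ι : Type*} (s : Finset ι) (f : ι → GI) :
    (∑ x ∈ s, f x).re = ∑ x ∈ s, (f x).re := by
  induction s using Finset.cons_induction with
  | empty => rfl
  | cons a s ha ih => rw [Finset.sum_cons, Finset.sum_cons, Zsqrtd.re_add, ih]

lemma neg_one_pow_gi (n : ℕ) : (-1 : GI) ^ n = (((-1 : ℤ) ^ n : ℤ) : GI) := by
  push_cast; ring

lemma main12 (m : ℕ) (hm : 4 ≤ m) (h8 : m % 8 = 6) (y : Fin m → ZMod 2) :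
    (∑ x : Fin m → ZMod 2, (-1 : ℤ) ^ (bf 1 2 x + dot x y).val)
      = 2 ^ (m / 2) * (-1 : ℤ) ^ (bf 1 2 y).val := by
  have neg1sq : ((-1 : ℤ)) ^ 2 = 1 := by norm_num
  have neg1sqG : ((-1 : GI)) ^ 2 = 1 := by norm_num
  -- sign of bf 1 2 as a real part
  have hsign : ∀ w : ℕ, ((1 + Ii) * Ii ^ w).re
      = (-1 : ℤ) ^ (if w % 4 = 1 ∨ w % 4 = 2 then 1 else 0) := by
    intro w
    rw [pow_mod4 Ii I4]
    have hlt : w % 4 = 0 ∨ w % 4 = 1 ∨ w % 4 = 2 ∨ w % 4 = 3 := by omega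
    rcases hlt with h | h | h | h <;> rw [h] <;>
      norm_num [Ii, pow_succ, Zsqrtd.re_mul, Zsqrtd.im_mul]
  -- step 1: rewrite summand as real part
  have hterm : ∀ x : Fin m → ZMod 2,
      (-1 : ℤ) ^ (bf 1 2 x + dot x y).val
        = ((1 + Ii) * (Ii ^ wt x * (-1 : GI) ^ (dot x y).val)).re := by
    intro x
    rw [pow_val_add (-1 : ℤ) neg1sq, neg_one_pow_gi, ← mul_assoc]
    have : ((1 + Ii) * Ii ^ wt x * (((-1 : ℤ) ^ (dot x y).val : ℤ) : GI)).re
        = ((1 + Ii) * Ii ^ wt x).re * (-1 : ℤ) ^ (dot x y).val := by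
      rw [Zsqrtd.re_mul, Zsqrtd.re_intCast, Zsqrtd.im_intCast]; ring
    rw [this, hsign, bf12_val]
  -- step 2: factor the sum
  have hfact : ∀ x : Fin m → ZMod 2,
      Ii ^ wt x * (-1 : GI) ^ (dot x y).val
        = ∏ j, (Ii ^ (x j).val * (-1 : GI) ^ (x j * y j).val) := by
    intro x
    rw [wt_eq_sum, ← Finset.prod_pow_eq_pow_sum, dot,
      pow_val_sum (-1 : GI) neg1sqG, Finset.prod_mul_distrib]
  have hsum : (∑ x : Fin m → ZMod 2, (1 + Ii) * (Ii ^ wt x * (-1 : GI) ^ (dot x y).val))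
      = (1 + Ii) * ((1 - Ii) ^ wt y * (1 + Ii) ^ (m - wt y)) := by
    rw [← Finset.mul_sum]
    congr 1
    calc ∑ x : Fin m → ZMod 2, Ii ^ wt x * (-1 : GI) ^ (dot x y).val
        = ∑ x : Fin m → ZMod 2, ∏ j, (Ii ^ (x j).val * (-1 : GI) ^ (x j * y j).val) := by
          exact Finset.sum_congr rfl fun x _ => hfact x
      _ = ∏ j, ∑ b : ZMod 2, Ii ^ b.val * (-1 : GI) ^ (b * y j).val := by
          rw [Finset.prod_univ_sum]
          rw [Fintype.piFinset_univ]
      _ = ∏ j, (if y j = 1 then 1 - Ii else 1 + Ii) := by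
          exact Finset.prod_congr rfl fun j _ => coord_sum (y j)
      _ = (1 - Ii) ^ wt y * (1 + Ii) ^ (m - wt y) := by
          rw [Finset.prod_ite, Finset.prod_const, Finset.prod_const]
          have hcard : (Finset.univ.filter fun j => ¬ y j = 1).card = m - wt y := by
            have := Finset.card_filter_add_card_filter_not
              (s := (Finset.univ : Finset (Fin m))) (p := fun j => y j = 1)
            simp only [Finset.card_univ, Fintype.card_fin] at this
            rw [wt]; omega
          rw [hcard]; rfl
  -- step 3: assemble
  have hwle : wt y ≤ m := by
    have := Finset.card_filter_le (Finset.univ : Finset (Fin m)) (fun i => y i = 1)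
    simpa [wt] using this
  have hmt : m = 2 * (m / 2) := by omega
  have hw2 : wt y ≤ 2 * (m / 2) := by omega
  have ht4 : (m / 2) % 4 = 3 := by omega
  calc (∑ x : Fin m → ZMod 2, (-1 : ℤ) ^ (bf 1 2 x + dot x y).val)
      = (∑ x : Fin m → ZMod 2,
          ((1 + Ii) * (Ii ^ wt x * (-1 : GI) ^ (dot x y).val)).re) := by
        exact Finset.sum_congr rfl fun x _ => hterm x
    _ = (∑ x : Fin m → ZMod 2, (1 + Ii) * (Ii ^ wt x * (-1 : GI) ^ (dot x y).val)).re := by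
        exact (re_sum _ _).symm
    _ = ((1 + Ii) * ((1 - Ii) ^ wt y * (1 + Ii) ^ (m - wt y))).re := by rw [hsum]
    _ = 2 ^ (m / 2) * (-1 : ℤ) ^ (if wt y % 4 = 1 ∨ wt y % 4 = 2 then 1 else 0) := by
        have := key_re (wt y) (m / 2) hw2 ht4
        rw [← hmt] at this; exact this
    _ = 2 ^ (m / 2) * (-1 : ℤ) ^ (bf 1 2 y).val := by rw [bf12_val]

theorem stmt_15 (m : ℕ) (hm : 4 ≤ m) (h8 : m % 8 = 6) :
    ∀ f ∈ ({@bf 1 2 m, @bf 0 3 m} : Set ((Fin m → ZMod 2) → ZMod 2)),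
      ∀ y : Fin m → ZMod 2,
        (∑ x : Fin m → ZMod 2, (-1 : ℤ) ^ (f x + dot x y).val)
          = 2 ^ (m / 2) * (-1 : ℤ) ^ (f y).val := by
  have hbf03 : ∀ x : Fin m → ZMod 2, bf 0 3 x = 1 + bf 1 2 x := by
    intro x
    rw [bf, bf]
    have hlt : wt x % 4 = 0 ∨ wt x % 4 = 1 ∨ wt x % 4 = 2 ∨ wt x % 4 = 3 := by omega
    rcases hlt with h | h | h | h <;> rw [h] <;> decide
  have hflip : ∀ a : ZMod 2, (-1 : ℤ) ^ ((1 : ZMod 2) + a).val = -((-1 : ℤ) ^ a.val) := by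
    decide
  intro f hf y
  rcases hf with hf | hf
  · rw [hf]; exact main12 m hm h8 y
  · rw [Set.mem_singleton_iff] at hf
    rw [hf]
    have h1 : ∀ x : Fin m → ZMod 2,
        (-1 : ℤ) ^ (bf 0 3 x + dot x y).val = -((-1 : ℤ) ^ (bf 1 2 x + dot x y).val) := by
      intro x
      rw [hbf03, add_assoc, hflip]
    calc (∑ x : Fin m → ZMod 2, (-1 : ℤ) ^ (bf 0 3 x + dot x y).val)
        = -(∑ x : Fin m → ZMod 2, (-1 : ℤ) ^ (bf 1 2 x + dot x y).val) := by
          rw [← Finset.sum_neg_distrib]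
          exact Finset.sum_congr rfl fun x _ => h1 x
      _ = -(2 ^ (m / 2) * (-1 : ℤ) ^ (bf 1 2 y).val) := by rw [main12 m hm h8 y]
      _ = 2 ^ (m / 2) * (-1 : ℤ) ^ (bf 0 3 y).val := by
          rw [hbf03, hflip]; ring
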